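/- Let L be a linear subspace of ℝ⁵ (with Minkowski form q(x₀,𝐱) = x₀² − ‖𝐱‖²) such that every x ∈ L ∩ dS satisfies |x₀| < sin(απ/2)·‖𝐱‖, where dS = {x : q(x) = −1}. Then the preimage of L under Φ̃(x₀,𝐱) = (sin(απ/2)x₀, 𝐱) is a spacelike subspace, i.e., every nonzero vector of Φ̃⁻¹(L) is spacelike. -/

import Mathlib

open Real

/-- The Minkowski quadratic form on `ℝ⁵ = ℝ × ℝ⁴`. -/
noncomputable def minkQ (x : ℝ × EuclideanSpace ℝ (Fin 4)) : ℝ := x.1 ^ 2 - ‖x.2‖ ^ 2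

/-- The map `Φ̃ (x₀, 𝐱) = (sin (α * π / 2) * x₀, 𝐱)`. -/
noncomputable def PhiTilde (α : ℝ) (x : ℝ × EuclideanSpace ℝ (Fin 4)) :
    ℝ × EuclideanSpace ℝ (Fin 4) := (Real.sin (α * π / 2) * x.1, x.2)

/-- Let `L` be a spacelike linear subspace of `ℝ⁵` such that every
`x ∈ L ∩ dS` (i.e. `x ∈ L` with `q x = -1`) satisfies `|x₀| < sin (α*π/2) * ‖𝐱‖`.
Then every nonzero vector in the preimage of `L` under `Φ̃` is spacelike. -/
theorem preimage_spacelike (α : ℝ) (hα0 : 0 < α) (hα1 : α ≤ 1)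
    (L : Submodule ℝ (ℝ × EuclideanSpace ℝ (Fin 4)))
    (hLspace : ∀ x ∈ L, x ≠ 0 → minkQ x < 0)
    (hLdS : ∀ x ∈ L, minkQ x = -1 → |x.1| < Real.sin (α * π / 2) * ‖x.2‖)
    (y : ℝ × EuclideanSpace ℝ (Fin 4)) (hy : PhiTilde α y ∈ L) (hy0 : y ≠ 0) :
    minkQ y < 0 := by
  set s := Real.sin (α * π / 2) with hsdef
  have hs : 0 < s := by
    apply Real.sin_pos_of_pos_of_lt_pi
    · positivity
    · nlinarith [Real.pi_pos]
  -- second coordinate is nonzero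
  have hy2 : y.2 ≠ 0 := by
    intro h2
    have h1 : y.1 ≠ 0 := by
      intro h1; exact hy0 (Prod.ext h1 h2)
    have hne : PhiTilde α y ≠ 0 := by
      intro h
      have := congrArg Prod.fst h
      simp [PhiTilde] at this
      rcases this with h | h
      · exact hs.ne' h
      · exact h1 h
    have := hLspace _ hy hne
    have : s ^ 2 * y.1 ^ 2 - ‖y.2‖ ^ 2 < 0 := by
      simpa [minkQ, PhiTilde, mul_pow] using this
    rw [h2] at this
    simp at this
    nlinarith [sq_nonneg y.1, sq_nonneg (s * y.1)]
  have hne : PhiTilde α y ≠ 0 := by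
    intro h
    exact hy2 (congrArg Prod.snd h)
  have hm : minkQ (PhiTilde α y) < 0 := hLspace _ hy hne
  set m := minkQ (PhiTilde α y) with hmdef
  have hmpos : 0 < -m := by linarith
  set c : ℝ := (Real.sqrt (-m))⁻¹ with hcdef
  have hc : 0 < c := by positivity
  have hzmem : c • PhiTilde α y ∈ L := L.smul_mem c hy
  have hsq : Real.sqrt (-m) ^ 2 = -m := Real.sq_sqrt hmpos.le
  have hz1 : (c • PhiTilde α y).1 = c * (s * y.1) := rfl
  have hz2norm : ‖(c • PhiTilde α y).2‖ = c * ‖y.2‖ := by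
    show ‖c • y.2‖ = c * ‖y.2‖
    rw [norm_smul, Real.norm_eq_abs, abs_of_pos hc]
  have hzq : minkQ (c • PhiTilde α y) = -1 := by
    have hm' : m = s ^ 2 * y.1 ^ 2 - ‖y.2‖ ^ 2 := by
      simp [hmdef, minkQ, PhiTilde, mul_pow]
      exact Or.inl rfl
    have hc2 : c ^ 2 = (-m)⁻¹ := by
      rw [hcdef, inv_pow, hsq]
    rw [minkQ, hz1, hz2norm]
    have : (c * (s * y.1)) ^ 2 - (c * ‖y.2‖) ^ 2 = c ^ 2 * m := by
      rw [hm']; ring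
    rw [this, hc2]
    field_simp
    rw [div_self hm.ne]
  have hlt := hLdS _ hzmem hzq
  rw [hz1, hz2norm] at hlt
  have habs : |c * (s * y.1)| = c * (s * |y.1|) := by
    rw [abs_mul, abs_mul, abs_of_pos hc, abs_of_pos hs]
  rw [habs] at hlt
  have hy1 : |y.1| < ‖y.2‖ := by
    have := (mul_lt_mul_iff_right₀ hc).mp (by linarith [hlt] : c * (s * |y.1|) < c * (s * ‖y.2‖))
    exact (mul_lt_mul_iff_right₀ hs).mp this
  have : y.1 ^ 2 < ‖y.2‖ ^ 2 := by
    have := sq_lt_sq' (by linarith [neg_abs_le y.1, abs_nonneg y.1] : -‖y.2‖ < y.1)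
      (lt_of_le_of_lt (le_abs_self y.1) hy1)
    simpa using this
  simp [minkQ]; linarith
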